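/- Let m ≥ 3 be an odd integer. Then the automorphism [e_m, i] of ℍ, x ↦ ē_m·x·i, has order exactly 4m as an element of the group of ℝ-linear automorphisms of ℍ. -/

import Mathlib

noncomputable section

open Quaternion Real

/-- The quaternion `i`. -/
def qi : Quaternion ℝ := ⟨0, 1, 0, 0⟩
/-- The quaternion `j`. -/
def qj : Quaternion ℝ := ⟨0, 0, 1, 0⟩
/-- The quaternion `k`. -/
def qk : Quaternion ℝ := ⟨0, 0, 0, 1⟩
/-- The unit quaternion `e_s = cos(π/s) + sin(π/s) i`. -/
def es (s : ℕ) : Quaternion ℝ := ⟨Real.cos (Real.pi / s), Real.sin (Real.pi / s), 0, 0⟩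

lemma norm_eq_one_of_normSq {a : Quaternion ℝ} (h : Quaternion.normSq a = 1) : ‖a‖ = 1 := by
  have h2 : ‖a‖ * ‖a‖ = 1 := by rw [← Quaternion.normSq_eq_norm_mul_self, h]
  rcases mul_self_eq_one_iff.1 h2 with h' | h'
  · exact h'
  · nlinarith [norm_nonneg a]

lemma norm_qi : ‖qi‖ = 1 := norm_eq_one_of_normSq (by rw [Quaternion.normSq_def']; simp [qi])
lemma norm_qj : ‖qj‖ = 1 := norm_eq_one_of_normSq (by rw [Quaternion.normSq_def']; simp [qj])
lemma norm_qk : ‖qk‖ = 1 := norm_eq_one_of_normSq (by rw [Quaternion.normSq_def']; simp [qk])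
lemma norm_es (s : ℕ) : ‖es s‖ = 1 :=
  norm_eq_one_of_normSq (by
    rw [Quaternion.normSq_def']
    simp only [es]
    simp [Real.sin_sq_add_cos_sq, Real.cos_sq_add_sin_sq])

lemma self_mul_star_of_norm_one {a : Quaternion ℝ} (h : ‖a‖ = 1) : a * star a = 1 := by
  rw [Quaternion.self_mul_star]
  have h1 : Quaternion.normSq a = 1 := by rw [Quaternion.normSq_eq_norm_mul_self, h, mul_one]
  rw [h1]; norm_num

lemma star_mul_self_of_norm_one {a : Quaternion ℝ} (h : ‖a‖ = 1) : star a * a = 1 := by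
  rw [Quaternion.star_mul_self]
  have h1 : Quaternion.normSq a = 1 := by rw [Quaternion.normSq_eq_norm_mul_self, h, mul_one]
  rw [h1]; norm_num

/-- The rotation `[l,r] : x ↦ l̄ x r` of `ℝ⁴ ≅ ℍ`, for unit quaternions `l, r`. -/
def qrot (l r : Quaternion ℝ) (hl : ‖l‖ = 1) (hr : ‖r‖ = 1) :
    Quaternion ℝ ≃ₗ[ℝ] Quaternion ℝ where
  toFun x := star l * x * r
  invFun x := l * x * star r
  map_add' x y := by noncomm_ring
  map_smul' c x := by simp [mul_smul_comm, smul_mul_assoc]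
  left_inv x := by
    have h : l * (star l * x * r) * star r = (l * star l) * x * (r * star r) := by noncomm_ring
    simp [h, self_mul_star_of_norm_one hl, self_mul_star_of_norm_one hr]
  right_inv x := by
    have h : star l * (l * x * star r) * r = (star l * l) * x * (star r * r) := by noncomm_ring
    simp [h, star_mul_self_of_norm_one hl, star_mul_self_of_norm_one hr]


/-- `cis θ = cos θ + sin θ · i` as a quaternion. -/
def qcis (θ : ℝ) : Quaternion ℝ := ⟨Real.cos θ, Real.sin θ, 0, 0⟩

lemma qcis_mul (a b : ℝ) : qcis a * qcis b = qcis (a + b) := by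
  ext <;> simp only [Quaternion.re_mul, Quaternion.imI_mul, Quaternion.imJ_mul,
    Quaternion.imK_mul] <;> simp [qcis, Real.cos_add, Real.sin_add] <;> ring

lemma star_qcis (a : ℝ) : star (qcis a) = qcis (-a) := by ext <;> simp only [Quaternion.re_star, Quaternion.imI_star, Quaternion.imJ_star, Quaternion.imK_star] <;> simp [qcis]

lemma qcis_zero : qcis 0 = 1 := by ext <;> simp [qcis]

lemma qcis_pow (a : ℝ) (n : ℕ) : qcis a ^ n = qcis (n * a) := by
  induction n with
  | zero => simp [qcis_zero]
  | succ k ih => rw [pow_succ, ih, qcis_mul]; push_cast; ring_nf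

lemma qi_eq_qcis : qi = qcis (Real.pi / 2) := by ext <;> simp [qi, qcis]

lemma qcis_mul_qj (a : ℝ) : qcis a * qj = qj * qcis (-a) := by
  ext <;> simp only [Quaternion.re_mul, Quaternion.imI_mul, Quaternion.imJ_mul,
    Quaternion.imK_mul] <;> simp [qcis, qj]

lemma qj_mul_qcis (a : ℝ) :
    qj * qcis a = (⟨0, 0, Real.cos a, -Real.sin a⟩ : Quaternion ℝ) := by
  ext <;> simp only [Quaternion.re_mul, Quaternion.imI_mul, Quaternion.imJ_mul,
    Quaternion.imK_mul] <;> simp [qcis, qj]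

lemma qcis_int_mul (k : ℤ) : qcis (k * (2 * Real.pi)) = 1 := by
  have hs : Real.sin ((k : ℝ) * (2 * Real.pi)) = 0 := by
    have h : (k : ℝ) * (2 * Real.pi) = ((2 * k : ℤ) : ℝ) * Real.pi := by push_cast; ring
    rw [h, Real.sin_int_mul_pi]
  ext <;> simp [qcis, Real.cos_int_mul_two_pi, hs]


lemma qrot_pow_apply (l r : Quaternion ℝ) (hl : ‖l‖ = 1) (hr : ‖r‖ = 1) (n : ℕ)
    (x : Quaternion ℝ) : ((qrot l r hl hr) ^ n) x = star (l ^ n) * x * r ^ n := by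
  induction n generalizing x with
  | zero => simp
  | succ k ih =>
    rw [pow_succ (qrot l r hl hr)]
    show ((qrot l r hl hr) ^ k) (star l * x * r) = _
    rw [ih, star_pow, star_pow, pow_succ, pow_succ']
    simp [mul_assoc]

/-- The element `[e_m, i]` has order exactly `4m` in the group of `ℝ`-linear
automorphisms of `ℍ`. -/
theorem orderOf_em_i (m : ℕ) (hm : 3 ≤ m) (hodd : Odd m) :
    orderOf (qrot (es m) qi (norm_es m) norm_qi) = 4 * m := by
  have hm0 : (m : ℝ) ≠ 0 := Nat.cast_ne_zero.2 (by omega)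
  have hesm : es m = qcis (Real.pi / m) := rfl
  have hgn : ∀ (n : ℕ) (x : Quaternion ℝ),
      ((qrot (es m) qi (norm_es m) norm_qi) ^ n) x
        = qcis (-((n : ℝ) * (Real.pi / m))) * x * qcis ((n : ℝ) * (Real.pi / 2)) := by
    intro n x
    rw [qrot_pow_apply, hesm, qi_eq_qcis, qcis_pow, qcis_pow, star_qcis]
  have h1 : (qrot (es m) qi (norm_es m) norm_qi) ^ (4 * m) = 1 := by
    apply LinearEquiv.toLinearMap_injective
    apply LinearMap.ext
    intro x
    show ((qrot (es m) qi (norm_es m) norm_qi) ^ (4 * m)) x = x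
    rw [hgn]
    have a1 : -(((4 * m : ℕ) : ℝ) * (Real.pi / m)) = ((-2 : ℤ) : ℝ) * (2 * Real.pi) := by
      push_cast; field_simp; ring
    have a2 : (((4 * m : ℕ) : ℝ) * (Real.pi / 2)) = ((m : ℤ) : ℝ) * (2 * Real.pi) := by
      push_cast; ring
    rw [a1, a2, qcis_int_mul, qcis_int_mul, one_mul, mul_one]
  have h2 : ∀ n : ℕ, (qrot (es m) qi (norm_es m) norm_qi) ^ n = 1 → 4 * m ∣ n := by
    intro n hn
    have hx1 : ((qrot (es m) qi (norm_es m) norm_qi) ^ n) 1 = 1 := by rw [hn]; rfl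
    have hxj : ((qrot (es m) qi (norm_es m) norm_qi) ^ n) qj = qj := by rw [hn]; rfl
    rw [hgn, mul_one, qcis_mul] at hx1
    rw [hgn, qcis_mul_qj, neg_neg, mul_assoc, qcis_mul, qj_mul_qcis] at hxj
    have hc1 : Real.cos (-((n : ℝ) * (Real.pi / m)) + (n : ℝ) * (Real.pi / 2)) = 1 := by
      simpa [qcis] using congrArg QuaternionAlgebra.re hx1
    have hc2 : Real.cos ((n : ℝ) * (Real.pi / m) + (n : ℝ) * (Real.pi / 2)) = 1 := by
      simpa [qj] using congrArg QuaternionAlgebra.imJ hxj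
    obtain ⟨k1, hk1⟩ := (Real.cos_eq_one_iff _).1 hc1
    obtain ⟨k2, hk2⟩ := (Real.cos_eq_one_iff _).1 hc2
    have e1 : (n : ℤ) * (m - 2) = 4 * k1 * m := by
      have h : (((n : ℤ) * (m - 2) : ℤ) : ℝ) = ((4 * k1 * m : ℤ) : ℝ) := by
        push_cast
        field_simp at hk1
        refine mul_right_cancel₀ Real.pi_ne_zero ?_
        linear_combination -Real.pi * hk1
      exact_mod_cast h
    have e2 : (n : ℤ) * (m + 2) = 4 * k2 * m := by
      have h : (((n : ℤ) * (m + 2) : ℤ) : ℝ) = ((4 * k2 * m : ℤ) : ℝ) := by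
        push_cast
        field_simp at hk2
        refine mul_right_cancel₀ Real.pi_ne_zero ?_
        linear_combination -Real.pi * hk2
      exact_mod_cast h
    have hm0' : (m : ℤ) ≠ 0 := by exact_mod_cast hm0
    have hn_eq : (n : ℤ) = (k2 - k1) * m := by
      refine mul_left_cancel₀ (by norm_num : (4 : ℤ) ≠ 0) ?_
      linear_combination e2 - e1
    have et : (k2 - k1) * ((m : ℤ) - 2) = 4 * k1 := by
      refine mul_right_cancel₀ hm0' ?_
      linear_combination e1 - ((m : ℤ) - 2) * hn_eq
    obtain ⟨u, hu⟩ := hodd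
    have hmu : (m : ℤ) = 2 * u + 1 := by exact_mod_cast hu
    have hodd2 : ¬ (2 : ℤ) ∣ ((m : ℤ) - 2) := by omega
    have h2t : (2 : ℤ) ∣ (k2 - k1) := by
      have hd : (2 : ℤ) ∣ (k2 - k1) * ((m : ℤ) - 2) := ⟨2 * k1, by linear_combination et⟩
      exact (Int.prime_two.dvd_mul.mp hd).resolve_right hodd2
    obtain ⟨w, hw⟩ := h2t
    have ew : w * ((m : ℤ) - 2) = 2 * k1 := by
      refine mul_left_cancel₀ (by norm_num : (2 : ℤ) ≠ 0) ?_
      linear_combination et - ((m : ℤ) - 2) * hw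
    have h2w : (2 : ℤ) ∣ w := by
      have hd : (2 : ℤ) ∣ w * ((m : ℤ) - 2) := ⟨k1, by linear_combination ew⟩
      exact (Int.prime_two.dvd_mul.mp hd).resolve_right hodd2
    obtain ⟨v, hv⟩ := h2w
    have hfinal : ((4 * m : ℕ) : ℤ) ∣ (n : ℤ) := ⟨v, by
      push_cast
      rw [hn_eq, hw, hv]; ring⟩
    exact_mod_cast hfinal
  exact Nat.dvd_antisymm (orderOf_dvd_of_pow_eq_one h1) (h2 _ (pow_orderOf_eq_one _))
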